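/- (Completeness and minimality via fundamental cycles.) Let G be a finite connected simple graph, let T be a spanning tree of G (a connected acyclic spanning subgraph), and let M be an additive commutative group. For each edge e of G not in T, fix a dart d_e along e and let w_e be the fundamental cycle of e: the closed walk consisting of the dart d_e followed by the unique path in T from the head of d_e back to its tail. Then the map that sends a family (g_e), indexed by the non-tree edges of G with values in M, to the dart function d ↦ Σ_e c_{w_e}(d) • g_e is a bijection from such families onto the set of all M-valued flows on G. In particular every equilibrium internal force distribution is represented by a unique choice of stress function pieces on the fundamental loops. -/

import Mathlib

open Finset

/-- The signed traversal count of a dart `d` by a walk `w`: the number of occurrences of `d`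
in `w.darts` minus the number of occurrences of the reverse of `d` in `w.darts`. -/
def signedCount {V : Type*} [DecidableEq V] {G : SimpleGraph V} {u v : V}
    (w : G.Walk u v) (d : G.Dart) : ℤ :=
  (w.darts.count d : ℤ) - (w.darts.count d.symm : ℤ)

/-- A function from the darts of `G` to an additive commutative group is a flow if it is
antisymmetric under dart reversal and, at every vertex, the sum of its values over the darts
with tail at that vertex is zero. -/
def IsFlow {V : Type*} [Fintype V] (G : SimpleGraph V) [DecidableRel G.Adj] [DecidableEq V]
    {M : Type*} [AddCommGroup M] (f : G.Dart → M) : Prop :=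
  (∀ d : G.Dart, f d.symm = -f d) ∧
    ∀ x : V, ∑ d ∈ univ.filter (fun d : G.Dart => d.fst = x), f d = 0

section Aux

/-- Fiberwise counting: the sum over the fiber of `x` under `f` of the multiplicities in `l`
is the multiplicity of `x` in `l.map f`. -/
lemma sum_count_fiber {α β : Type*} [Fintype α] [DecidableEq α] [DecidableEq β]
    (l : List α) (f : α → β) (x : β) :
    ∑ a ∈ univ.filter (fun a => f a = x), l.count a = (l.map f).count x := by
  induction l with
  | nil => simp
  | cons b l ih =>
    simp only [List.count_cons, List.map_cons, Finset.sum_add_distrib, ih]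
    congr 1
    simp only [beq_iff_eq]
    rw [Finset.sum_ite_eq (univ.filter (fun a => f a = x)) b (fun _ => 1)]
    simp [eq_comm]

variable {V : Type*} [DecidableEq V] {G : SimpleGraph V}

@[simp] lemma dart_symm_fst (d : G.Dart) : d.symm.fst = d.snd := rfl
@[simp] lemma dart_symm_snd (d : G.Dart) : d.symm.snd = d.fst := rfl

/-- For a closed walk, the sum of signed traversal counts over darts with a given tail
vanishes. -/
lemma sum_signedCount_closed [Fintype V] [DecidableRel G.Adj] {u : V}
    (w : G.Walk u u) (x : V) :
    ∑ d ∈ univ.filter (fun d : G.Dart => d.fst = x), signedCount w d = 0 := by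
  classical
  unfold signedCount
  rw [Finset.sum_sub_distrib]
  have h1 : ∑ d ∈ univ.filter (fun d : G.Dart => d.fst = x), (w.darts.count d : ℤ)
      = ((w.darts.map (·.fst)).count x : ℤ) := by
    rw [← Nat.cast_sum]
    exact congrArg (fun n : ℕ => (n : ℤ)) (sum_count_fiber w.darts (·.fst) x)
  have h2 : ∑ d ∈ univ.filter (fun d : G.Dart => d.fst = x), (w.darts.count d.symm : ℤ)
      = ((w.darts.map (·.snd)).count x : ℤ) := by
    rw [← Nat.cast_sum]
    have : ∑ d ∈ univ.filter (fun d : G.Dart => d.fst = x), w.darts.count d.symm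
        = ∑ d ∈ univ.filter (fun d : G.Dart => d.snd = x), w.darts.count d := by
      refine Finset.sum_nbij' (fun d => d.symm) (fun d => d.symm) ?_ ?_ ?_ ?_ ?_ <;>
        simp [SimpleGraph.Dart.symm_symm]
    rw [this]
    exact congrArg (fun n : ℕ => (n : ℤ)) (sum_count_fiber w.darts (·.snd) x)
  rw [h1, h2, SimpleGraph.Walk.map_fst_darts, SimpleGraph.Walk.map_snd_darts]
  have hne := w.support_ne_nil
  have hL : w.support.dropLast ++ [u] = w.support := by
    conv_rhs => rw [← List.dropLast_append_getLast hne]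
    rw [w.getLast_support]
  have hC : w.support = u :: w.support.tail := w.support_eq_cons
  have : w.support.dropLast.count x + [u].count x
      = w.support.tail.count x + [u].count x := by
    rw [← List.count_append, hL]
    conv_lhs => rw [hC]
    rw [List.count_cons]
    simp [List.count_cons, Nat.add_comm]
  have := Nat.add_right_cancel this
  simp [this]

/-- The sum of a flow over the darts leaving a vertex set vanishes. -/
lemma flow_cut {V : Type*} [Fintype V] [DecidableEq V] {G : SimpleGraph V}
    [DecidableRel G.Adj] {M : Type*} [AddCommGroup M]
    {f : G.Dart → M} (hf : IsFlow G f) (A : Finset V) :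
    ∑ d ∈ univ.filter (fun d : G.Dart => d.fst ∈ A ∧ d.snd ∉ A), f d = 0 := by
  classical
  have h1 : ∑ d ∈ univ.filter (fun d : G.Dart => d.fst ∈ A), f d = 0 := by
    rw [← Finset.sum_fiberwise_eq_sum_filter univ A (fun d : G.Dart => d.fst) f]
    exact Finset.sum_eq_zero fun x _ => hf.2 x
  have h2 : ∑ d ∈ univ.filter (fun d : G.Dart => d.fst ∈ A ∧ d.snd ∈ A), f d = 0 := by
    refine Finset.sum_involution (fun d _ => d.symm) ?_ ?_ ?_ ?_
    · intro d _; rw [hf.1 d]; abel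
    · intro d _ _; exact d.symm_ne
    · intro d hd; simp only [Finset.mem_filter, Finset.mem_univ, true_and] at hd ⊢
      exact ⟨hd.2, hd.1⟩
    · intro d _; exact d.symm_symm
  have h3 := Finset.sum_filter_add_sum_filter_not
    (univ.filter (fun d : G.Dart => d.fst ∈ A)) (fun d : G.Dart => d.snd ∈ A) f
  rw [Finset.filter_filter, Finset.filter_filter, h1, h2] at h3
  simpa using h3

end Aux

section Tree

variable {V : Type*} [Fintype V] [DecidableEq V] {G : SimpleGraph V} [DecidableRel G.Adj]
  {T : SimpleGraph V} {M : Type*} [AddCommGroup M]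

/-- A flow vanishing on all darts whose edge is not in an acyclic subgraph `T` vanishes
identically. -/
lemma flow_eq_zero_of_support_acyclic (hT : T.IsAcyclic)
    {f : G.Dart → M} (hf : IsFlow G f)
    (h0 : ∀ d : G.Dart, d.edge ∉ T.edgeSet → f d = 0) (d : G.Dart) : f d = 0 := by
  classical
  by_cases hd : d.edge ∈ T.edgeSet
  · set a := d.fst with ha
    set b := d.snd with hb
    have hTadj : T.Adj a b := T.mem_edgeSet.mp hd
    set A : Finset V :=
      univ.filter (fun x => (T \ SimpleGraph.fromEdgeSet {s(a, b)}).Reachable b x) with hA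
    have hbA : b ∈ A := by
      simp only [hA, Finset.mem_filter, Finset.mem_univ, true_and]
      exact SimpleGraph.Reachable.refl b
    have haA : a ∉ A := by
      have hbridge : T.IsBridge s(a, b) :=
        (SimpleGraph.isAcyclic_iff_forall_adj_isBridge.mp hT) hTadj
      have := (SimpleGraph.isBridge_iff.mp hbridge)
      simp only [hA, Finset.mem_filter, Finset.mem_univ, true_and]
      intro hr
      exact this hr.symm
    have hcut := flow_cut hf A
    have hsingle : ∑ x ∈ univ.filter (fun d : G.Dart => d.fst ∈ A ∧ d.snd ∉ A), f x
        = f d.symm := by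
      refine Finset.sum_eq_single_of_mem d.symm ?_ ?_
      · simp only [Finset.mem_filter, Finset.mem_univ, true_and, dart_symm_fst, dart_symm_snd]
        exact ⟨hbA, haA⟩
      · intro d' hd' hne
        simp only [Finset.mem_filter, Finset.mem_univ, true_and] at hd'
        by_cases hTd' : d'.edge ∈ T.edgeSet
        · exfalso
          have hTadj' : T.Adj d'.fst d'.snd := T.mem_edgeSet.mp hTd'
          by_cases hee : d'.edge = d.edge
          · rcases (SimpleGraph.dart_edge_eq_iff d' d).mp hee with rfl | rfl
            · exact haA hd'.1
            · exact hne rfl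
          · have hadj2 : (T \ SimpleGraph.fromEdgeSet {s(a, b)}).Adj d'.fst d'.snd := by
              refine ⟨hTadj', ?_⟩
              simp only [SimpleGraph.fromEdgeSet_adj, Set.mem_singleton_iff]
              rintro ⟨h1, -⟩
              exact hee h1
            have hrb : (T \ SimpleGraph.fromEdgeSet {s(a, b)}).Reachable b d'.fst := by
              simpa [hA] using hd'.1
            exact hd'.2 (by simp [hA] ; exact hrb.trans hadj2.reachable)
        · exact h0 d' hTd'
    rw [hsingle] at hcut
    rw [hf.1 d] at hcut
    exact neg_eq_zero.mp hcut
  · exact h0 d hd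

end Tree


section Fund

variable {V : Type*} [Fintype V] [DecidableEq V] {G : SimpleGraph V} [DecidableRel G.Adj]
  {T : SimpleGraph V} [DecidableRel T.Adj] (hle : T ≤ G)
  {M : Type*} [AddCommGroup M]

lemma darts_mapLe_mem_tree {u v : V} (p : T.Walk u v) :
    ∀ d ∈ (p.mapLe hle).darts, d.edge ∈ T.edgeSet := by
  induction p with
  | nil => simp [SimpleGraph.Walk.mapLe]
  | cons h p ih =>
    intro d hd
    simp only [SimpleGraph.Walk.mapLe, SimpleGraph.Walk.map_cons,
      SimpleGraph.Walk.darts_cons, List.mem_cons,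
      SimpleGraph.Hom.ofLE_apply] at hd
    rcases hd with rfl | hd
    · exact T.mem_edgeSet.mpr h
    · exact ih d hd

lemma signedCount_symm {u v : V} (w : G.Walk u v) (d : G.Dart) :
    signedCount w d.symm = -signedCount w d := by
  unfold signedCount
  rw [SimpleGraph.Dart.symm_symm]
  ring

variable (dart : {e : Sym2 V // e ∈ G.edgeSet ∧ e ∉ T.edgeSet} → G.Dart)
  (q : ∀ e, T.Walk (dart e).snd (dart e).fst)

lemma signedCount_fundamental (hdart : ∀ e, (dart e).edge = (e : Sym2 V)) (e e' : {e : Sym2 V // e ∈ G.edgeSet ∧ e ∉ T.edgeSet}) :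
    signedCount (SimpleGraph.Walk.cons (dart e').adj ((q e').mapLe hle)) (dart e)
      = if e' = e then 1 else 0 := by
  classical
  have htail : ∀ d ∈ ((q e').mapLe hle).darts, d.edge ∈ T.edgeSet :=
    darts_mapLe_mem_tree hle (q e')
  have hnot : (dart e) ∉ ((q e').mapLe hle).darts := fun h =>
    e.2.2 (by rw [← hdart e]; exact htail _ h)
  have hnot' : (dart e).symm ∉ ((q e').mapLe hle).darts := fun h =>
    e.2.2 (by rw [← hdart e, ← SimpleGraph.Dart.edge_symm]; exact htail _ h)
  have hdarts : (SimpleGraph.Walk.cons (dart e').adj ((q e').mapLe hle)).darts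
      = dart e' :: ((q e').mapLe hle).darts := by
    rw [SimpleGraph.Walk.darts_cons]
  unfold signedCount
  rw [hdarts, List.count_cons, List.count_cons,
    List.count_eq_zero.mpr hnot, List.count_eq_zero.mpr hnot']
  by_cases h : e' = e
  · subst h
    simp [Ne.symm (SimpleGraph.Dart.symm_ne (dart e'))]
  · have hedge : (dart e').edge ≠ (dart e).edge := by
      rw [hdart, hdart]
      exact fun hh => h (Subtype.ext hh)
    have h1 : (dart e) ≠ dart e' := fun hh => hedge (by rw [hh])
    have h2 : (dart e).symm ≠ dart e' := fun hh =>
      hedge (by rw [← hh, SimpleGraph.Dart.edge_symm])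
    simp [h1, h2, Ne.symm h1, Ne.symm h2, h]

lemma eval_fund (hdart : ∀ e, (dart e).edge = (e : Sym2 V)) (g : {e : Sym2 V // e ∈ G.edgeSet ∧ e ∉ T.edgeSet} → M)
    (e : {e : Sym2 V // e ∈ G.edgeSet ∧ e ∉ T.edgeSet}) :
    ∑ e', signedCount (SimpleGraph.Walk.cons (dart e').adj ((q e').mapLe hle)) (dart e) • g e'
      = g e := by
  classical
  simp only [signedCount_fundamental hle dart q hdart, ite_smul, one_smul, zero_smul]
  simp

lemma isFlow_fund (g : {e : Sym2 V // e ∈ G.edgeSet ∧ e ∉ T.edgeSet} → M) :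
    IsFlow G (fun d : G.Dart =>
      ∑ e, signedCount (SimpleGraph.Walk.cons (dart e).adj ((q e).mapLe hle)) d • g e) := by
  constructor
  · intro d
    simp only [signedCount_symm, neg_smul, Finset.sum_neg_distrib]
  · intro x
    rw [Finset.sum_comm]
    refine Finset.sum_eq_zero fun e _ => ?_
    rw [← Finset.sum_smul, sum_signedCount_closed, zero_smul]

end Fund

/-- Completeness and minimality via fundamental cycles: let `T` be a spanning tree of a finite
connected simple graph `G`.  For each edge of `G` not in `T`, fix a dart `dart e` along it and
let the fundamental cycle `w e` be that dart followed by the (unique) path in `T` from its head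
back to its tail.  Then the map sending a family `g` of stress function pieces, indexed by the
non-tree edges with values in an additive commutative group `M`, to the dart function
`d ↦ ∑ e, c_{w e}(d) • g e` is a bijection onto the set of all `M`-valued flows on `G`. -/
theorem bijective_fundamentalCycle_pieces_onto_flows {V : Type*} [Fintype V] [DecidableEq V]
    {G : SimpleGraph V} [DecidableRel G.Adj] (hG : G.Connected)
    (T : SimpleGraph V) [DecidableRel T.Adj] (hle : T ≤ G) (hT : T.IsTree)
    {M : Type*} [AddCommGroup M]
    (dart : {e : Sym2 V // e ∈ G.edgeSet ∧ e ∉ T.edgeSet} → G.Dart)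
    (hdart : ∀ e, (dart e).edge = (e : Sym2 V))
    (q : ∀ e, T.Walk (dart e).snd (dart e).fst)
    (hq : ∀ e, (q e).IsPath) :
    Set.BijOn
      (fun (g : {e : Sym2 V // e ∈ G.edgeSet ∧ e ∉ T.edgeSet} → M) (d : G.Dart) =>
        ∑ e, signedCount (SimpleGraph.Walk.cons (dart e).adj ((q e).mapLe hle)) d • g e)
      Set.univ {f : G.Dart → M | IsFlow G f} := by
  classical
  refine ⟨fun g _ => isFlow_fund hle dart q g, fun g1 _ g2 _ hgg => ?_, fun f hf => ?_⟩
  · funext e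
    have h := congrFun hgg (dart e)
    simp only at h
    rwa [eval_fund hle dart q hdart g1 e, eval_fund hle dart q hdart g2 e] at h
  · refine ⟨fun e => f (dart e), Set.mem_univ _, ?_⟩
    set g : {e : Sym2 V // e ∈ G.edgeSet ∧ e ∉ T.edgeSet} → M := fun e => f (dart e) with hg
    set F : G.Dart → M := fun d =>
      ∑ e, signedCount (SimpleGraph.Walk.cons (dart e).adj ((q e).mapLe hle)) d • g e with hF
    have hFflow : IsFlow G F := isFlow_fund hle dart q g
    have hfflow : IsFlow G f := hf
    have hflow : IsFlow G (fun d => f d - F d) := by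
      constructor
      · intro d
        simp only [hfflow.1 d, hFflow.1 d]
        abel
      · intro x
        rw [Finset.sum_sub_distrib, hfflow.2 x, hFflow.2 x, sub_zero]
    have hvanish : ∀ d : G.Dart, d.edge ∉ T.edgeSet → f d - F d = 0 := by
      intro d hd
      set e₀ : {e : Sym2 V // e ∈ G.edgeSet ∧ e ∉ T.edgeSet} := ⟨d.edge, d.edge_mem, hd⟩ with he₀
      have hFe : F (dart e₀) = g e₀ := eval_fund hle dart q hdart g e₀
      rcases (SimpleGraph.dart_edge_eq_iff (dart e₀) d).mp (hdart e₀) with hh | hh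
      · rw [← hh, hFe]
        simp [hg]
      · have hd' : d = (dart e₀).symm := by rw [hh, SimpleGraph.Dart.symm_symm]
        rw [hd', hfflow.1, hFflow.1, hFe, hg]
        simp
    have hzero : ∀ d : G.Dart, f d - F d = 0 :=
      flow_eq_zero_of_support_acyclic hT.IsAcyclic hflow hvanish
    funext d
    exact (sub_eq_zero.mp (hzero d)).symm
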